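/- arXiv:2112.05515 — 2 statements merged into one kernel-verified Lean document; each statement's English description precedes it below -/
import Mathlib

section
/- Cut admissibility for BI: if Δ ⊢cf ψ and Γ(ψ) ⊢cf φ are cut-free derivable, then Γ(Δ) ⊢cf φ is cut-free derivable. Consequently every sequent derivable with cut is derivable without cut. -/
/-- Formulas of BI. -/
inductive Frml : Type
  | atom : Nat → Frml
  | top : Frml
  | bot : Frml
  | emp : Frml
  | and : Frml → Frml → Frml
  | or : Frml → Frml → Frml
  | imp : Frml → Frml → Frml
  | sep : Frml → Frml → Frml
  | wand : Frml → Frml → Frml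

/-- Bunches: trees with formula leaves, multiplicative/additive units and nodes. -/
inductive Bunch : Type
  | frml : Frml → Bunch
  | mempty : Bunch    -- ∅ₘ
  | aempty : Bunch    -- ∅ₐ
  | comma : Bunch → Bunch → Bunch   -- multiplicative ','
  | semic : Bunch → Bunch → Bunch   -- additive ';'

/-- Bunched contexts: bunches with a single hole. -/
inductive BCtx : Type
  | hole : BCtx
  | commaL : BCtx → Bunch → BCtx
  | commaR : Bunch → BCtx → BCtx
  | semicL : BCtx → Bunch → BCtx
  | semicR : Bunch → BCtx → BCtx

/-- Filling the hole of a bunched context with a bunch. -/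
def BCtx.fill : BCtx → Bunch → Bunch
  | .hole, Δ => Δ
  | .commaL C Γ, Δ => .comma (C.fill Δ) Γ
  | .commaR Γ C, Δ => .comma Γ (C.fill Δ)
  | .semicL C Γ, Δ => .semic (C.fill Δ) Γ
  | .semicR Γ C, Δ => .semic Γ (C.fill Δ)

/-- Equivalence of bunches: commutative-monoid laws for (',', ∅ₘ) and (';', ∅ₐ),
under arbitrary bunched contexts. -/
inductive BEquiv : Bunch → Bunch → Prop
  | refl (Δ : Bunch) : BEquiv Δ Δ
  | symm {Δ Δ' : Bunch} : BEquiv Δ Δ' → BEquiv Δ' Δ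
  | trans {Δ₁ Δ₂ Δ₃ : Bunch} : BEquiv Δ₁ Δ₂ → BEquiv Δ₂ Δ₃ → BEquiv Δ₁ Δ₃
  | commaComm (Δ₁ Δ₂ : Bunch) : BEquiv (.comma Δ₁ Δ₂) (.comma Δ₂ Δ₁)
  | semicComm (Δ₁ Δ₂ : Bunch) : BEquiv (.semic Δ₁ Δ₂) (.semic Δ₂ Δ₁)
  | commaAssoc (Δ₁ Δ₂ Δ₃ : Bunch) :
      BEquiv (.comma Δ₁ (.comma Δ₂ Δ₃)) (.comma (.comma Δ₁ Δ₂) Δ₃)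
  | semicAssoc (Δ₁ Δ₂ Δ₃ : Bunch) :
      BEquiv (.semic Δ₁ (.semic Δ₂ Δ₃)) (.semic (.semic Δ₁ Δ₂) Δ₃)
  | commaUnit (Δ : Bunch) : BEquiv (.comma Δ .mempty) Δ
  | semicUnit (Δ : Bunch) : BEquiv (.semic Δ .aempty) Δ
  | ctx (C : BCtx) {Δ Δ' : Bunch} : BEquiv Δ Δ' → BEquiv (C.fill Δ) (C.fill Δ')

/-- Cut-free sequent calculus for BI, with the axiom rule restricted to atoms. -/
inductive Proves : Bunch → Frml → Prop
  | ax (a : Nat) : Proves (.frml (.atom a)) (.atom a)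
  | equiv {Δ Δ' : Bunch} {φ : Frml} :
      Proves Δ' φ → BEquiv Δ Δ' → Proves Δ φ
  | weaken (C : BCtx) {Δ₁ Δ₂ : Bunch} {φ : Frml} :
      Proves (C.fill Δ₁) φ → Proves (C.fill (.semic Δ₁ Δ₂)) φ
  | contract (C : BCtx) {Δ₁ : Bunch} {φ : Frml} :
      Proves (C.fill (.semic Δ₁ Δ₁)) φ → Proves (C.fill Δ₁) φ
  | empR : Proves .mempty .emp
  | empL (C : BCtx) {φ : Frml} :
      Proves (C.fill .mempty) φ → Proves (C.fill (.frml .emp)) φ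
  | sepR {Δ₁ Δ₂ : Bunch} {φ ψ : Frml} :
      Proves Δ₁ φ → Proves Δ₂ ψ → Proves (.comma Δ₁ Δ₂) (.sep φ ψ)
  | sepL (C : BCtx) {φ ψ χ : Frml} :
      Proves (C.fill (.comma (.frml φ) (.frml ψ))) χ →
      Proves (C.fill (.frml (.sep φ ψ))) χ
  | wandR {Δ : Bunch} {φ ψ : Frml} :
      Proves (.comma Δ (.frml φ)) ψ → Proves Δ (.wand φ ψ)
  | wandL (C : BCtx) {Δ₁ Δ₂ : Bunch} {φ ψ χ : Frml} :
      Proves Δ₁ φ → Proves (C.fill (.comma Δ₂ (.frml ψ))) χ →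
      Proves (C.fill (.comma (.comma Δ₁ Δ₂) (.frml (.wand φ ψ)))) χ
  | topR : Proves .aempty .top
  | topL (C : BCtx) {φ : Frml} :
      Proves (C.fill .aempty) φ → Proves (C.fill (.frml .top)) φ
  | andR {Δ₁ Δ₂ : Bunch} {φ ψ : Frml} :
      Proves Δ₁ φ → Proves Δ₂ ψ → Proves (.semic Δ₁ Δ₂) (.and φ ψ)
  | andL (C : BCtx) {φ ψ χ : Frml} :
      Proves (C.fill (.semic (.frml φ) (.frml ψ))) χ →
      Proves (C.fill (.frml (.and φ ψ))) χ
  | impR {Δ : Bunch} {φ ψ : Frml} :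
      Proves (.semic Δ (.frml φ)) ψ → Proves Δ (.imp φ ψ)
  | impL (C : BCtx) {Δ₁ Δ₂ : Bunch} {φ ψ χ : Frml} :
      Proves Δ₁ φ → Proves (C.fill (.semic Δ₂ (.frml ψ))) χ →
      Proves (C.fill (.semic (.semic Δ₁ Δ₂) (.frml (.imp φ ψ)))) χ
  | botL (C : BCtx) {φ : Frml} : Proves (C.fill (.frml .bot)) φ
  | orR1 {Δ : Bunch} {φ ψ : Frml} : Proves Δ φ → Proves Δ (.or φ ψ)
  | orR2 {Δ : Bunch} {φ ψ : Frml} : Proves Δ ψ → Proves Δ (.or φ ψ)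
  | orL (C : BCtx) {φ ψ χ : Frml} :
      Proves (C.fill (.frml φ)) χ → Proves (C.fill (.frml ψ)) χ →
      Proves (C.fill (.frml (.or φ ψ))) χ

/-- The formula collapse `⟨Δ⟩` of a bunch. -/
def Bunch.collapse : Bunch → Frml
  | .frml φ => φ
  | .mempty => .emp
  | .aempty => .top
  | .comma Δ₁ Δ₂ => .sep Δ₁.collapse Δ₂.collapse
  | .semic Δ₁ Δ₂ => .and Δ₁.collapse Δ₂.collapse

/-- BI sequent calculus with the cut rule. -/
inductive ProvesC : Bunch → Frml → Prop
  | ax (a : Nat) : ProvesC (.frml (.atom a)) (.atom a)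
  | equiv {Δ Δ' : Bunch} {φ : Frml} :
      ProvesC Δ' φ → BEquiv Δ Δ' → ProvesC Δ φ
  | weaken (C : BCtx) {Δ₁ Δ₂ : Bunch} {φ : Frml} :
      ProvesC (C.fill Δ₁) φ → ProvesC (C.fill (.semic Δ₁ Δ₂)) φ
  | contract (C : BCtx) {Δ₁ : Bunch} {φ : Frml} :
      ProvesC (C.fill (.semic Δ₁ Δ₁)) φ → ProvesC (C.fill Δ₁) φ
  | empR : ProvesC .mempty .emp
  | empL (C : BCtx) {φ : Frml} :
      ProvesC (C.fill .mempty) φ → ProvesC (C.fill (.frml .emp)) φ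
  | sepR {Δ₁ Δ₂ : Bunch} {φ ψ : Frml} :
      ProvesC Δ₁ φ → ProvesC Δ₂ ψ → ProvesC (.comma Δ₁ Δ₂) (.sep φ ψ)
  | sepL (C : BCtx) {φ ψ χ : Frml} :
      ProvesC (C.fill (.comma (.frml φ) (.frml ψ))) χ →
      ProvesC (C.fill (.frml (.sep φ ψ))) χ
  | wandR {Δ : Bunch} {φ ψ : Frml} :
      ProvesC (.comma Δ (.frml φ)) ψ → ProvesC Δ (.wand φ ψ)
  | wandL (C : BCtx) {Δ₁ Δ₂ : Bunch} {φ ψ χ : Frml} :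
      ProvesC Δ₁ φ → ProvesC (C.fill (.comma Δ₂ (.frml ψ))) χ →
      ProvesC (C.fill (.comma (.comma Δ₁ Δ₂) (.frml (.wand φ ψ)))) χ
  | topR : ProvesC .aempty .top
  | topL (C : BCtx) {φ : Frml} :
      ProvesC (C.fill .aempty) φ → ProvesC (C.fill (.frml .top)) φ
  | andR {Δ₁ Δ₂ : Bunch} {φ ψ : Frml} :
      ProvesC Δ₁ φ → ProvesC Δ₂ ψ → ProvesC (.semic Δ₁ Δ₂) (.and φ ψ)
  | andL (C : BCtx) {φ ψ χ : Frml} :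
      ProvesC (C.fill (.semic (.frml φ) (.frml ψ))) χ →
      ProvesC (C.fill (.frml (.and φ ψ))) χ
  | impR {Δ : Bunch} {φ ψ : Frml} :
      ProvesC (.semic Δ (.frml φ)) ψ → ProvesC Δ (.imp φ ψ)
  | impL (C : BCtx) {Δ₁ Δ₂ : Bunch} {φ ψ χ : Frml} :
      ProvesC Δ₁ φ → ProvesC (C.fill (.semic Δ₂ (.frml ψ))) χ →
      ProvesC (C.fill (.semic (.semic Δ₁ Δ₂) (.frml (.imp φ ψ)))) χ
  | botL (C : BCtx) {φ : Frml} : ProvesC (C.fill (.frml .bot)) φ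
  | orR1 {Δ : Bunch} {φ ψ : Frml} : ProvesC Δ φ → ProvesC Δ (.or φ ψ)
  | orR2 {Δ : Bunch} {φ ψ : Frml} : ProvesC Δ ψ → ProvesC Δ (.or φ ψ)
  | orL (C : BCtx) {φ ψ χ : Frml} :
      ProvesC (C.fill (.frml φ)) χ → ProvesC (C.fill (.frml ψ)) χ →
      ProvesC (C.fill (.frml (.or φ ψ))) χ

  | cut (C : BCtx) {Δ' : Bunch} {φ ψ : Frml} :
      ProvesC Δ' ψ → ProvesC (C.fill (.frml ψ)) φ → ProvesC (C.fill Δ') φ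
/-! ### Syntactic lemmas -/

/-- Composition of bunched contexts (outer `C`, inner `D`). -/
def BCtx.comp : BCtx → BCtx → BCtx
  | .hole, D => D
  | .commaL C Γ, D => .commaL (C.comp D) Γ
  | .commaR Γ C, D => .commaR Γ (C.comp D)
  | .semicL C Γ, D => .semicL (C.comp D) Γ
  | .semicR Γ C, D => .semicR Γ (C.comp D)

theorem BCtx.fill_comp : ∀ (C D : BCtx) (Δ : Bunch),
    (C.comp D).fill Δ = C.fill (D.fill Δ) := by
  intro C
  induction C with
  | hole => intros; rfl
  | commaL C Γ ih => intro D Δ; simp [BCtx.comp, BCtx.fill, ih]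
  | commaR Γ C ih => intro D Δ; simp [BCtx.comp, BCtx.fill, ih]
  | semicL C Γ ih => intro D Δ; simp [BCtx.comp, BCtx.fill, ih]
  | semicR Γ C ih => intro D Δ; simp [BCtx.comp, BCtx.fill, ih]

/-- Identity expansion: `φ ⊢ φ` for every formula. -/
theorem idExp : ∀ φ : Frml, Proves (.frml φ) φ := by
  intro φ
  induction φ with
  | atom a => exact .ax a
  | top => exact .topL .hole .topR
  | bot => exact .botL .hole
  | emp => exact .empL .hole .empR
  | and φ ψ ihφ ihψ => exact .andL .hole (.andR ihφ ihψ)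
  | or φ ψ ihφ ihψ => exact .orL .hole (.orR1 ihφ) (.orR2 ihψ)
  | sep φ ψ ihφ ihψ => exact .sepL .hole (.sepR ihφ ihψ)
  | imp φ ψ ihφ ihψ =>
      apply Proves.impR
      have h2 : Proves (.semic .aempty (.frml ψ)) ψ :=
        .equiv (.equiv ihψ (.semicUnit _)) (.semicComm _ _)
      have h := Proves.impL (C := .hole) (Δ₁ := .frml φ) (Δ₂ := .aempty)
        (ψ := ψ) ihφ h2
      have e1 : BEquiv (.semic (.semic (.frml φ) .aempty) (.frml (.imp φ ψ)))
          (.semic (.frml φ) (.frml (.imp φ ψ))) :=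
        .ctx (.semicL .hole (.frml (.imp φ ψ))) (.semicUnit _)
      exact .equiv h ((e1.trans (.semicComm _ _)).symm)
  | wand φ ψ ihφ ihψ =>
      apply Proves.wandR
      have h2 : Proves (.comma .mempty (.frml ψ)) ψ :=
        .equiv (.equiv ihψ (.commaUnit _)) (.commaComm _ _)
      have h := Proves.wandL (C := .hole) (Δ₁ := .frml φ) (Δ₂ := .mempty)
        (ψ := ψ) ihφ h2
      have e1 : BEquiv (.comma (.comma (.frml φ) .mempty) (.frml (.wand φ ψ)))
          (.comma (.frml φ) (.frml (.wand φ ψ))) :=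
        .ctx (.commaL .hole (.frml (.wand φ ψ))) (.commaUnit _)
      exact .equiv h ((e1.trans (.commaComm _ _)).symm)

/-- Collapsing a sub-bunch to its formula is admissible. -/
theorem collapse_r : ∀ (Δ : Bunch) (C : BCtx) {χ : Frml},
    Proves (C.fill Δ) χ → Proves (C.fill (.frml Δ.collapse)) χ := by
  intro Δ
  induction Δ with
  | frml φ => intro C χ h; exact h
  | mempty => intro C χ h; exact .empL C h
  | aempty => intro C χ h; exact .topL C h
  | comma Δ₁ Δ₂ ih₁ ih₂ =>
      intro C χ h
      have h1 := ih₁ (C.comp (.commaL .hole Δ₂))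
        (by rw [BCtx.fill_comp]; exact h)
      rw [BCtx.fill_comp] at h1
      have h2 := ih₂ (C.comp (.commaR (.frml Δ₁.collapse) .hole))
        (by rw [BCtx.fill_comp]; exact h1)
      rw [BCtx.fill_comp] at h2
      exact .sepL C h2
  | semic Δ₁ Δ₂ ih₁ ih₂ =>
      intro C χ h
      have h1 := ih₁ (C.comp (.semicL .hole Δ₂))
        (by rw [BCtx.fill_comp]; exact h)
      rw [BCtx.fill_comp] at h1
      have h2 := ih₂ (C.comp (.semicR (.frml Δ₁.collapse) .hole))
        (by rw [BCtx.fill_comp]; exact h1)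
      rw [BCtx.fill_comp] at h2
      exact .andL C h2

/-- Refinement: replace some leaves `⟨b⟩` by the bunch `b`. -/
inductive Ref : Bunch → Bunch → Prop
  | leaf (b : Bunch) : Ref (.frml b.collapse) b
  | mempty : Ref .mempty .mempty
  | aempty : Ref .aempty .aempty
  | comma {a a' b b'} : Ref a a' → Ref b b' → Ref (.comma a b) (.comma a' b')
  | semic {a a' b b'} : Ref a a' → Ref b b' → Ref (.semic a b) (.semic a' b')

theorem Ref.rfl : ∀ Δ : Bunch, Ref Δ Δ := by
  intro Δ
  induction Δ with
  | frml φ => exact Ref.leaf (.frml φ)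
  | mempty => exact .mempty
  | aempty => exact .aempty
  | comma _ _ ih₁ ih₂ => exact .comma ih₁ ih₂
  | semic _ _ ih₁ ih₂ => exact .semic ih₁ ih₂

theorem Ref.fillCong : ∀ (C : BCtx) {a a'}, Ref a a' → Ref (C.fill a) (C.fill a') := by
  intro C
  induction C with
  | hole => intro a a' h; exact h
  | commaL C Γ ih => intro a a' h; exact .comma (ih h) (Ref.rfl Γ)
  | commaR Γ C ih => intro a a' h; exact .comma (Ref.rfl Γ) (ih h)
  | semicL C Γ ih => intro a a' h; exact .semic (ih h) (Ref.rfl Γ)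
  | semicR Γ C ih => intro a a' h; exact .semic (Ref.rfl Γ) (ih h)

theorem fill_ref : ∀ (C : BCtx) {Δ G : Bunch}, Ref (C.fill Δ) G →
    ∃ (C' : BCtx) (Δ' : Bunch), G = C'.fill Δ' ∧ Ref Δ Δ' ∧
      (∀ a a', Ref a a' → Ref (C.fill a) (C'.fill a')) := by
  intro C
  induction C with
  | hole =>
      intro Δ G h
      exact ⟨BCtx.hole, G, rfl, h, fun a a' r => r⟩
  | commaL C Γ ih =>
      intro Δ G h
      cases h with
      | comma h₁ h₂ =>
          obtain ⟨C', Δ', rfl, r, p⟩ := ih h₁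
          exact ⟨.commaL C' _, Δ', rfl, r, fun a a' ra => .comma (p a a' ra) h₂⟩
  | commaR Γ C ih =>
      intro Δ G h
      cases h with
      | comma h₁ h₂ =>
          obtain ⟨C', Δ', rfl, r, p⟩ := ih h₂
          exact ⟨.commaR _ C', Δ', rfl, r, fun a a' ra => .comma h₁ (p a a' ra)⟩
  | semicL C Γ ih =>
      intro Δ G h
      cases h with
      | semic h₁ h₂ =>
          obtain ⟨C', Δ', rfl, r, p⟩ := ih h₁
          exact ⟨.semicL C' _, Δ', rfl, r, fun a a' ra => .semic (p a a' ra) h₂⟩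
  | semicR Γ C ih =>
      intro Δ G h
      cases h with
      | semic h₁ h₂ =>
          obtain ⟨C', Δ', rfl, r, p⟩ := ih h₂
          exact ⟨.semicR _ C', Δ', rfl, r, fun a a' ra => .semic h₁ (p a a' ra)⟩

/-! Shape analysis of collapses. -/

theorem collapse_atom {h : Bunch} {a : Nat} (e : h.collapse = .atom a) :
    h = .frml (.atom a) := by
  cases h <;> simp_all [Bunch.collapse]

theorem collapse_bot {h : Bunch} (e : h.collapse = .bot) : h = .frml .bot := by
  cases h <;> simp_all [Bunch.collapse]

theorem collapse_or {h : Bunch} {φ ψ} (e : h.collapse = .or φ ψ) :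
    h = .frml (.or φ ψ) := by
  cases h <;> simp_all [Bunch.collapse]

theorem collapse_imp {h : Bunch} {φ ψ} (e : h.collapse = .imp φ ψ) :
    h = .frml (.imp φ ψ) := by
  cases h <;> simp_all [Bunch.collapse]

theorem collapse_wand {h : Bunch} {φ ψ} (e : h.collapse = .wand φ ψ) :
    h = .frml (.wand φ ψ) := by
  cases h <;> simp_all [Bunch.collapse]

theorem collapse_emp {h : Bunch} (e : h.collapse = .emp) :
    h = .frml .emp ∨ h = .mempty := by
  cases h <;> simp_all [Bunch.collapse]

theorem collapse_top {h : Bunch} (e : h.collapse = .top) :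
    h = .frml .top ∨ h = .aempty := by
  cases h <;> simp_all [Bunch.collapse]

theorem collapse_sep {h : Bunch} {φ ψ} (e : h.collapse = .sep φ ψ) :
    h = .frml (.sep φ ψ) ∨
      ∃ h₁ h₂, h = .comma h₁ h₂ ∧ h₁.collapse = φ ∧ h₂.collapse = ψ := by
  cases h <;> simp_all [Bunch.collapse]

theorem collapse_and {h : Bunch} {φ ψ} (e : h.collapse = .and φ ψ) :
    h = .frml (.and φ ψ) ∨
      ∃ h₁ h₂, h = .semic h₁ h₂ ∧ h₁.collapse = φ ∧ h₂.collapse = ψ := by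
  cases h <;> simp_all [Bunch.collapse]

theorem bequiv_ref {Δ Δ' : Bunch} (h : BEquiv Δ Δ') :
    (∀ G, Ref Δ G → ∃ G', Ref Δ' G' ∧ BEquiv G G') ∧
    (∀ G, Ref Δ' G → ∃ G', Ref Δ G' ∧ BEquiv G G') := by
  induction h with
  | refl Δ => exact ⟨fun G r => ⟨G, r, .refl G⟩, fun G r => ⟨G, r, .refl G⟩⟩
  | symm _ ih => exact ⟨ih.2, ih.1⟩
  | trans _ _ ih₁ ih₂ =>
      constructor
      · intro G r
        obtain ⟨G₁, r₁, e₁⟩ := ih₁.1 G r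
        obtain ⟨G₂, r₂, e₂⟩ := ih₂.1 G₁ r₁
        exact ⟨G₂, r₂, e₁.trans e₂⟩
      · intro G r
        obtain ⟨G₁, r₁, e₁⟩ := ih₂.2 G r
        obtain ⟨G₂, r₂, e₂⟩ := ih₁.2 G₁ r₁
        exact ⟨G₂, r₂, e₁.trans e₂⟩
  | commaComm Δ₁ Δ₂ =>
      constructor
      · intro G r
        cases r with
        | comma r₁ r₂ => exact ⟨_, .comma r₂ r₁, .commaComm _ _⟩
      · intro G r
        cases r with
        | comma r₁ r₂ => exact ⟨_, .comma r₂ r₁, .commaComm _ _⟩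
  | semicComm Δ₁ Δ₂ =>
      constructor
      · intro G r
        cases r with
        | semic r₁ r₂ => exact ⟨_, .semic r₂ r₁, .semicComm _ _⟩
      · intro G r
        cases r with
        | semic r₁ r₂ => exact ⟨_, .semic r₂ r₁, .semicComm _ _⟩
  | commaAssoc Δ₁ Δ₂ Δ₃ =>
      constructor
      · intro G r
        cases r with
        | comma r₁ r₂ =>
            cases r₂ with
            | comma r₂ r₃ =>
                exact ⟨_, .comma (.comma r₁ r₂) r₃, .commaAssoc _ _ _⟩
      · intro G r
        cases r with
        | comma r₁ r₂ =>
            cases r₁ with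
            | comma ra rb =>
                exact ⟨_, .comma ra (.comma rb r₂), (BEquiv.commaAssoc _ _ _).symm⟩
  | semicAssoc Δ₁ Δ₂ Δ₃ =>
      constructor
      · intro G r
        cases r with
        | semic r₁ r₂ =>
            cases r₂ with
            | semic r₂ r₃ =>
                exact ⟨_, .semic (.semic r₁ r₂) r₃, .semicAssoc _ _ _⟩
      · intro G r
        cases r with
        | semic r₁ r₂ =>
            cases r₁ with
            | semic ra rb =>
                exact ⟨_, .semic ra (.semic rb r₂), (BEquiv.semicAssoc _ _ _).symm⟩
  | commaUnit Δ =>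
      constructor
      · intro G r
        cases r with
        | comma r₁ r₂ => cases r₂; exact ⟨_, r₁, .commaUnit _⟩
      · intro G r
        exact ⟨_, .comma r .mempty, (BEquiv.commaUnit _).symm⟩
  | semicUnit Δ =>
      constructor
      · intro G r
        cases r with
        | semic r₁ r₂ => cases r₂; exact ⟨_, r₁, .semicUnit _⟩
      · intro G r
        exact ⟨_, .semic r .aempty, (BEquiv.semicUnit _).symm⟩
  | ctx C _ ih =>
      constructor
      · intro G r
        obtain ⟨C', Δ'', rfl, r', p⟩ := fill_ref C r
        obtain ⟨G₀, r₀, e₀⟩ := ih.1 _ r'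
        exact ⟨C'.fill G₀, p _ _ r₀, .ctx C' e₀⟩
      · intro G r
        obtain ⟨C', Δ'', rfl, r', p⟩ := fill_ref C r
        obtain ⟨G₀, r₀, e₀⟩ := ih.2 _ r'
        exact ⟨C'.fill G₀, p _ _ r₀, .ctx C' e₀⟩

theorem ref_frml {ξ : Frml} {G : Bunch} (r : Ref (.frml ξ) G) : G.collapse = ξ := by
  cases r with
  | leaf b => rfl

theorem ref_proves {Δ : Bunch} {χ : Frml} (h : Proves Δ χ) :
    ∀ G, Ref Δ G → Proves G χ := by
  induction h with
  | ax a =>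
      intro G r
      rcases collapse_atom (ref_frml r) with rfl
      exact .ax a
  | equiv _ e ih =>
      intro G r
      obtain ⟨G', r', e'⟩ := (bequiv_ref e).1 G r
      exact .equiv (ih G' r') e'
  | weaken C _ ih =>
      intro G r
      obtain ⟨C', h₀, rfl, r', p⟩ := fill_ref C r
      cases r' with
      | semic r₁ r₂ => exact .weaken C' (ih _ (p _ _ r₁))
  | contract C _ ih =>
      intro G r
      obtain ⟨C', h₀, rfl, r', p⟩ := fill_ref C r
      exact .contract C' (ih _ (p _ _ (.semic r' r')))
  | empR =>
      intro G r
      cases r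
      exact .empR
  | empL C _ ih =>
      intro G r
      obtain ⟨C', h₀, rfl, r', p⟩ := fill_ref C r
      rcases collapse_emp (ref_frml r') with rfl | rfl
      · exact .empL C' (ih _ (p _ _ .mempty))
      · exact ih _ (p _ _ .mempty)
  | sepR _ _ ih₁ ih₂ =>
      intro G r
      cases r with
      | comma r₁ r₂ => exact .sepR (ih₁ _ r₁) (ih₂ _ r₂)
  | sepL C _ ih =>
      intro G r
      obtain ⟨C', h₀, rfl, r', p⟩ := fill_ref C r
      rcases collapse_sep (ref_frml r') with rfl | ⟨h₁, h₂, rfl, e₁, e₂⟩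
      · exact .sepL C' (ih _ (p _ _ (.comma (Ref.rfl _) (Ref.rfl _))))
      · exact ih _ (p _ _ (.comma (e₁ ▸ Ref.leaf h₁) (e₂ ▸ Ref.leaf h₂)))
  | wandR _ ih =>
      intro G r
      exact .wandR (ih _ (.comma r (Ref.rfl _)))
  | wandL C _ _ ih₁ ih₂ =>
      intro G r
      obtain ⟨C', h₀, rfl, r', p⟩ := fill_ref C r
      cases r' with
      | comma rL rR =>
          cases rL with
          | comma r₁ r₂ =>
              rcases collapse_wand (ref_frml rR) with rfl
              exact .wandL C' (ih₁ _ r₁) (ih₂ _ (p _ _ (.comma r₂ (Ref.rfl _))))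
  | topR => intro G r; cases r; exact .topR
  | topL C _ ih =>
      intro G r
      obtain ⟨C', h₀, rfl, r', p⟩ := fill_ref C r
      rcases collapse_top (ref_frml r') with rfl | rfl
      · exact .topL C' (ih _ (p _ _ .aempty))
      · exact ih _ (p _ _ .aempty)
  | andR _ _ ih₁ ih₂ =>
      intro G r
      cases r with
      | semic r₁ r₂ => exact .andR (ih₁ _ r₁) (ih₂ _ r₂)
  | andL C _ ih =>
      intro G r
      obtain ⟨C', h₀, rfl, r', p⟩ := fill_ref C r
      rcases collapse_and (ref_frml r') with rfl | ⟨h₁, h₂, rfl, e₁, e₂⟩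
      · exact .andL C' (ih _ (p _ _ (.semic (Ref.rfl _) (Ref.rfl _))))
      · exact ih _ (p _ _ (.semic (e₁ ▸ Ref.leaf h₁) (e₂ ▸ Ref.leaf h₂)))
  | impR _ ih =>
      intro G r
      exact .impR (ih _ (.semic r (Ref.rfl _)))
  | impL C _ _ ih₁ ih₂ =>
      intro G r
      obtain ⟨C', h₀, rfl, r', p⟩ := fill_ref C r
      cases r' with
      | semic rL rR =>
          cases rL with
          | semic r₁ r₂ =>
              rcases collapse_imp (ref_frml rR) with rfl
              exact .impL C' (ih₁ _ r₁) (ih₂ _ (p _ _ (.semic r₂ (Ref.rfl _))))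
  | botL C =>
      intro G r
      obtain ⟨C', h₀, rfl, r', p⟩ := fill_ref C r
      rcases collapse_bot (ref_frml r') with rfl
      exact .botL C'
  | orR1 _ ih => intro G r; exact .orR1 (ih _ r)
  | orR2 _ ih => intro G r; exact .orR2 (ih _ r)
  | orL C _ _ ih₁ ih₂ =>
      intro G r
      obtain ⟨C', h₀, rfl, r', p⟩ := fill_ref C r
      rcases collapse_or (ref_frml r') with rfl
      exact .orL C' (ih₁ _ (p _ _ (Ref.rfl _))) (ih₂ _ (p _ _ (Ref.rfl _)))

/-- Expanding a collapsed formula back into its bunch is admissible. -/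
theorem collapse_l (Δ : Bunch) (C : BCtx) {χ : Frml}
    (h : Proves (C.fill (.frml Δ.collapse)) χ) : Proves (C.fill Δ) χ :=
  ref_proves h _ (Ref.fillCong C (Ref.leaf Δ))

/-- Invertibility of the right implication rule. -/
theorem inv_imp {Δ : Bunch} {ξ : Frml} (h : Proves Δ ξ) :
    ∀ φ ψ, ξ = .imp φ ψ → Proves (.semic Δ (.frml φ)) ψ := by
  induction h with
  | ax a => intro φ ψ e; cases e
  | equiv _ e ih =>
      intro φ ψ rfl
      exact .equiv (ih φ ψ rfl) (.ctx (.semicL .hole (.frml φ)) e)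
  | weaken C _ ih =>
      intro φ ψ rfl
      exact .weaken (.semicL C (.frml φ)) (ih φ ψ rfl)
  | contract C _ ih =>
      intro φ ψ rfl
      exact .contract (.semicL C (.frml φ)) (ih φ ψ rfl)
  | empR => intro φ ψ e; cases e
  | empL C _ ih =>
      intro φ ψ rfl
      exact .empL (.semicL C (.frml φ)) (ih φ ψ rfl)
  | sepR _ _ _ _ => intro φ ψ e; cases e
  | sepL C _ ih =>
      intro φ ψ rfl
      exact .sepL (.semicL C (.frml φ)) (ih φ ψ rfl)
  | wandR _ _ => intro φ ψ e; cases e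
  | wandL C h₁ _ _ ih₂ =>
      intro φ ψ rfl
      exact .wandL (.semicL C (.frml φ)) h₁ (ih₂ φ ψ rfl)
  | topR => intro φ ψ e; cases e
  | topL C _ ih =>
      intro φ ψ rfl
      exact .topL (.semicL C (.frml φ)) (ih φ ψ rfl)
  | andR _ _ _ _ => intro φ ψ e; cases e
  | andL C _ ih =>
      intro φ ψ rfl
      exact .andL (.semicL C (.frml φ)) (ih φ ψ rfl)
  | impR h _ =>
      intro φ ψ e
      injection e with e₁ e₂
      subst e₁; subst e₂
      exact h
  | impL C h₁ _ _ ih₂ =>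
      intro φ ψ rfl
      exact .impL (.semicL C (.frml φ)) h₁ (ih₂ φ ψ rfl)
  | botL C => intro φ ψ rfl; exact .botL (.semicL C (.frml φ))
  | orR1 _ _ => intro φ ψ e; cases e
  | orR2 _ _ => intro φ ψ e; cases e
  | orL C _ _ ih₁ ih₂ =>
      intro φ ψ rfl
      exact .orL (.semicL C (.frml φ)) (ih₁ φ ψ rfl) (ih₂ φ ψ rfl)

/-- Invertibility of the right magic-wand rule. -/
theorem inv_wand {Δ : Bunch} {ξ : Frml} (h : Proves Δ ξ) :
    ∀ φ ψ, ξ = .wand φ ψ → Proves (.comma Δ (.frml φ)) ψ := by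
  induction h with
  | ax a => intro φ ψ e; cases e
  | equiv _ e ih =>
      intro φ ψ rfl
      exact .equiv (ih φ ψ rfl) (.ctx (.commaL .hole (.frml φ)) e)
  | weaken C _ ih =>
      intro φ ψ rfl
      exact .weaken (.commaL C (.frml φ)) (ih φ ψ rfl)
  | contract C _ ih =>
      intro φ ψ rfl
      exact .contract (.commaL C (.frml φ)) (ih φ ψ rfl)
  | empR => intro φ ψ e; cases e
  | empL C _ ih =>
      intro φ ψ rfl
      exact .empL (.commaL C (.frml φ)) (ih φ ψ rfl)
  | sepR _ _ _ _ => intro φ ψ e; cases e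
  | sepL C _ ih =>
      intro φ ψ rfl
      exact .sepL (.commaL C (.frml φ)) (ih φ ψ rfl)
  | wandR h _ =>
      intro φ ψ e
      injection e with e₁ e₂
      subst e₁; subst e₂
      exact h
  | wandL C h₁ _ _ ih₂ =>
      intro φ ψ rfl
      exact .wandL (.commaL C (.frml φ)) h₁ (ih₂ φ ψ rfl)
  | topR => intro φ ψ e; cases e
  | topL C _ ih =>
      intro φ ψ rfl
      exact .topL (.commaL C (.frml φ)) (ih φ ψ rfl)
  | andR _ _ _ _ => intro φ ψ e; cases e
  | andL C _ ih =>
      intro φ ψ rfl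
      exact .andL (.commaL C (.frml φ)) (ih φ ψ rfl)
  | impR _ _ => intro φ ψ e; cases e
  | impL C h₁ _ _ ih₂ =>
      intro φ ψ rfl
      exact .impL (.commaL C (.frml φ)) h₁ (ih₂ φ ψ rfl)
  | botL C => intro φ ψ rfl; exact .botL (.commaL C (.frml φ))
  | orR1 _ _ => intro φ ψ e; cases e
  | orR2 _ _ => intro φ ψ e; cases e
  | orL C _ _ ih₁ ih₂ =>
      intro φ ψ rfl
      exact .orL (.commaL C (.frml φ)) (ih₁ φ ψ rfl) (ih₂ φ ψ rfl)

/-! ### Semantics in the syntactic algebra of closed sets of bunches -/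

def Pr (φ : Frml) : Set Bunch := {Δ | Proves Δ φ}

def cl (X : Set Bunch) : Set Bunch :=
  {Δ | ∀ χ : Frml, (∀ Δ' ∈ X, Proves Δ' χ) → Proves Δ χ}

def BClosed (X : Set Bunch) : Prop := cl X ⊆ X

theorem subset_cl {X : Set Bunch} : X ⊆ cl X :=
  fun _ hΔ χ h => h _ hΔ

theorem cl_mono {X Y : Set Bunch} (h : X ⊆ Y) : cl X ⊆ cl Y :=
  fun _ hΔ χ hc => hΔ χ (fun Δ' hΔ' => hc Δ' (h hΔ'))

theorem cl_idem {X : Set Bunch} : cl (cl X) ⊆ cl X :=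
  fun _ hΔ χ hc => hΔ χ (fun Δ' hΔ' => hΔ' χ hc)

theorem cl_closed {X : Set Bunch} : BClosed (cl X) := cl_idem

theorem Pr_closed {φ : Frml} : BClosed (Pr φ) :=
  fun _ hΔ => hΔ φ (fun _ h => h)

theorem cl_subset_closed {X Y : Set Bunch} (h : X ⊆ Y) (hY : BClosed Y) :
    cl X ⊆ Y := fun Δ hΔ => hY (cl_mono h hΔ)

/-- Multiplicative product of sets of bunches. -/
def sprod (X Y : Set Bunch) : Set Bunch :=
  cl {Δ | ∃ a ∈ X, ∃ b ∈ Y, Δ = .comma a b}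

/-- Additive product of sets of bunches. -/
def aprod (X Y : Set Bunch) : Set Bunch :=
  cl {Δ | ∃ a ∈ X, ∃ b ∈ Y, Δ = .semic a b}

def fimp (X Y : Set Bunch) : Set Bunch := {Δ | ∀ a ∈ X, Bunch.semic Δ a ∈ Y}

def fwand (X Y : Set Bunch) : Set Bunch := {Δ | ∀ a ∈ X, Bunch.comma Δ a ∈ Y}

theorem sprod_mono {X X' Y Y' : Set Bunch} (hX : X ⊆ X') (hY : Y ⊆ Y') :
    sprod X Y ⊆ sprod X' Y' := by
  apply cl_mono
  rintro Δ ⟨a, ha, b, hb, rfl⟩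
  exact ⟨a, hX ha, b, hY hb, rfl⟩

theorem aprod_mono {X X' Y Y' : Set Bunch} (hX : X ⊆ X') (hY : Y ⊆ Y') :
    aprod X Y ⊆ aprod X' Y' := by
  apply cl_mono
  rintro Δ ⟨a, ha, b, hb, rfl⟩
  exact ⟨a, hX ha, b, hY hb, rfl⟩

/-- Key nucleus property, left argument, multiplicative. -/
theorem sprod_cl_l (X Y : Set Bunch) : sprod (cl X) Y = sprod X Y := by
  refine le_antisymm ?_ (sprod_mono subset_cl (le_refl Y))
  apply cl_subset_closed _ cl_closed
  rintro Δ ⟨a, ha, b, hb, rfl⟩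
  intro χ hχ
  have hX : ∀ a' ∈ X, Proves a' (.wand b.collapse χ) := by
    intro a' ha'
    exact .wandR (collapse_r b (.commaR a' .hole) (hχ _ ⟨a', ha', b, hb, rfl⟩))
  have := ha (.wand b.collapse χ) hX
  exact collapse_l b (.commaR a .hole) (inv_wand this _ _ rfl)

theorem sprod_cl_r (X Y : Set Bunch) : sprod X (cl Y) = sprod X Y := by
  refine le_antisymm ?_ (sprod_mono (le_refl X) subset_cl)
  apply cl_subset_closed _ cl_closed
  rintro Δ ⟨a, ha, b, hb, rfl⟩
  intro χ hχ
  have hY : ∀ b' ∈ Y, Proves b' (.wand a.collapse χ) := by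
    intro b' hb'
    have h1 : Proves (.comma b' a) χ :=
      .equiv (hχ _ ⟨a, ha, b', hb', rfl⟩) (.commaComm _ _)
    exact .wandR (collapse_r a (.commaR b' .hole) h1)
  have h2 := hb (.wand a.collapse χ) hY
  have h3 := collapse_l a (.commaR b .hole) (inv_wand h2 _ _ rfl)
  exact .equiv h3 (.commaComm _ _)

theorem aprod_cl_l (X Y : Set Bunch) : aprod (cl X) Y = aprod X Y := by
  refine le_antisymm ?_ (aprod_mono subset_cl (le_refl Y))
  apply cl_subset_closed _ cl_closed
  rintro Δ ⟨a, ha, b, hb, rfl⟩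
  intro χ hχ
  have hX : ∀ a' ∈ X, Proves a' (.imp b.collapse χ) := by
    intro a' ha'
    exact .impR (collapse_r b (.semicR a' .hole) (hχ _ ⟨a', ha', b, hb, rfl⟩))
  have := ha (.imp b.collapse χ) hX
  exact collapse_l b (.semicR a .hole) (inv_imp this _ _ rfl)

theorem aprod_cl_r (X Y : Set Bunch) : aprod X (cl Y) = aprod X Y := by
  refine le_antisymm ?_ (aprod_mono (le_refl X) subset_cl)
  apply cl_subset_closed _ cl_closed
  rintro Δ ⟨a, ha, b, hb, rfl⟩
  intro χ hχ
  have hY : ∀ b' ∈ Y, Proves b' (.imp a.collapse χ) := by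
    intro b' hb'
    have h1 : Proves (.semic b' a) χ :=
      .equiv (hχ _ ⟨a, ha, b', hb', rfl⟩) (.semicComm _ _)
    exact .impR (collapse_r a (.semicR b' .hole) h1)
  have h2 := hb (.imp a.collapse χ) hY
  have h3 := collapse_l a (.semicR b .hole) (inv_imp h2 _ _ rfl)
  exact .equiv h3 (.semicComm _ _)

theorem fimp_closed {X Y : Set Bunch} (hY : BClosed Y) : BClosed (fimp X Y) := by
  intro Δ hΔ a ha
  apply hY
  intro χ hχ
  have hS : ∀ Δ' ∈ fimp X Y, Proves Δ' (.imp a.collapse χ) := by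
    intro Δ' hΔ'
    exact .impR (collapse_r a (.semicR Δ' .hole) (hχ _ (hΔ' a ha)))
  have h1 := hΔ (.imp a.collapse χ) hS
  exact collapse_l a (.semicR Δ .hole) (inv_imp h1 _ _ rfl)

theorem fwand_closed {X Y : Set Bunch} (hY : BClosed Y) : BClosed (fwand X Y) := by
  intro Δ hΔ a ha
  apply hY
  intro χ hχ
  have hS : ∀ Δ' ∈ fwand X Y, Proves Δ' (.wand a.collapse χ) := by
    intro Δ' hΔ'
    exact .wandR (collapse_r a (.commaR Δ' .hole) (hχ _ (hΔ' a ha)))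
  have h1 := hΔ (.wand a.collapse χ) hS
  exact collapse_l a (.commaR Δ .hole) (inv_wand h1 _ _ rfl)

/-- Interpretation of formulas. -/
def fsem : Frml → Set Bunch
  | .atom a => Pr (.atom a)
  | .top => cl {Bunch.aempty}
  | .bot => cl ∅
  | .emp => cl {Bunch.mempty}
  | .and φ ψ => aprod (fsem φ) (fsem ψ)
  | .or φ ψ => cl (fsem φ ∪ fsem ψ)
  | .imp φ ψ => fimp (fsem φ) (fsem ψ)
  | .sep φ ψ => sprod (fsem φ) (fsem ψ)
  | .wand φ ψ => fwand (fsem φ) (fsem ψ)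

/-- Interpretation of bunches. -/
def bsem : Bunch → Set Bunch
  | .frml φ => fsem φ
  | .mempty => cl {Bunch.mempty}
  | .aempty => cl {Bunch.aempty}
  | .comma Δ₁ Δ₂ => sprod (bsem Δ₁) (bsem Δ₂)
  | .semic Δ₁ Δ₂ => aprod (bsem Δ₁) (bsem Δ₂)

/-- Interpretation of bunched contexts, acting on sets. -/
def csem : BCtx → Set Bunch → Set Bunch
  | .hole, X => X
  | .commaL C Γ, X => sprod (csem C X) (bsem Γ)
  | .commaR Γ C, X => sprod (bsem Γ) (csem C X)
  | .semicL C Γ, X => aprod (csem C X) (bsem Γ)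
  | .semicR Γ C, X => aprod (bsem Γ) (csem C X)

theorem bsem_fill : ∀ (C : BCtx) (Δ : Bunch), bsem (C.fill Δ) = csem C (bsem Δ) := by
  intro C
  induction C with
  | hole => intro Δ; rfl
  | commaL C Γ ih => intro Δ; simp [BCtx.fill, bsem, csem, ih]
  | commaR Γ C ih => intro Δ; simp [BCtx.fill, bsem, csem, ih]
  | semicL C Γ ih => intro Δ; simp [BCtx.fill, bsem, csem, ih]
  | semicR Γ C ih => intro Δ; simp [BCtx.fill, bsem, csem, ih]

theorem fsem_closed : ∀ φ : Frml, BClosed (fsem φ) := by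
  intro φ
  induction φ with
  | atom a => exact Pr_closed
  | top => exact cl_closed
  | bot => exact cl_closed
  | emp => exact cl_closed
  | and φ ψ ihφ ihψ => exact cl_closed
  | or φ ψ ihφ ihψ => exact cl_closed
  | imp φ ψ ihφ ihψ => exact fimp_closed ihψ
  | sep φ ψ ihφ ihψ => exact cl_closed
  | wand φ ψ ihφ ihψ => exact fwand_closed ihψ

theorem bsem_closed : ∀ Δ : Bunch, BClosed (bsem Δ) := by
  intro Δ
  induction Δ with
  | frml φ => exact fsem_closed φ
  | mempty => exact cl_closed
  | aempty => exact cl_closed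
  | comma _ _ _ _ => exact cl_closed
  | semic _ _ _ _ => exact cl_closed

theorem csem_mono : ∀ (C : BCtx) {X Y : Set Bunch}, X ⊆ Y → csem C X ⊆ csem C Y := by
  intro C
  induction C with
  | hole => intro X Y h; exact h
  | commaL C Γ ih => intro X Y h; exact sprod_mono (ih h) (le_refl _)
  | commaR Γ C ih => intro X Y h; exact sprod_mono (le_refl _) (ih h)
  | semicL C Γ ih => intro X Y h; exact aprod_mono (ih h) (le_refl _)
  | semicR Γ C ih => intro X Y h; exact aprod_mono (le_refl _) (ih h)

theorem csem_cl : ∀ (C : BCtx) (X : Set Bunch), csem C (cl X) ⊆ cl (csem C X) := by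
  intro C
  induction C with
  | hole => intro X; exact le_refl _
  | commaL C Γ ih =>
      intro X
      calc sprod (csem C (cl X)) (bsem Γ)
          ⊆ sprod (cl (csem C X)) (bsem Γ) := sprod_mono (ih X) (le_refl _)
        _ = sprod (csem C X) (bsem Γ) := sprod_cl_l _ _
        _ ⊆ cl (sprod (csem C X) (bsem Γ)) := subset_cl
  | commaR Γ C ih =>
      intro X
      calc sprod (bsem Γ) (csem C (cl X))
          ⊆ sprod (bsem Γ) (cl (csem C X)) := sprod_mono (le_refl _) (ih X)
        _ = sprod (bsem Γ) (csem C X) := sprod_cl_r _ _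
        _ ⊆ cl (sprod (bsem Γ) (csem C X)) := subset_cl
  | semicL C Γ ih =>
      intro X
      calc aprod (csem C (cl X)) (bsem Γ)
          ⊆ aprod (cl (csem C X)) (bsem Γ) := aprod_mono (ih X) (le_refl _)
        _ = aprod (csem C X) (bsem Γ) := aprod_cl_l _ _
        _ ⊆ cl (aprod (csem C X) (bsem Γ)) := subset_cl
  | semicR Γ C ih =>
      intro X
      calc aprod (bsem Γ) (csem C (cl X))
          ⊆ aprod (bsem Γ) (cl (csem C X)) := aprod_mono (le_refl _) (ih X)
        _ = aprod (bsem Γ) (csem C X) := aprod_cl_r _ _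
        _ ⊆ cl (aprod (bsem Γ) (csem C X)) := subset_cl

/-- Workhorse: push a `cl`-inclusion through a context into a closed target. -/
theorem csem_push {X Y Z : Set Bunch} (C : BCtx) (hXY : X ⊆ cl Y)
    (h : csem C Y ⊆ Z) (hZ : BClosed Z) : csem C X ⊆ Z := by
  calc csem C X ⊆ csem C (cl Y) := csem_mono C hXY
    _ ⊆ cl (csem C Y) := csem_cl C Y
    _ ⊆ Z := cl_subset_closed h hZ

theorem cl_eq_of {X Y : Set Bunch} (h₁ : X ⊆ cl Y) (h₂ : Y ⊆ cl X) :
    cl X = cl Y :=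
  le_antisymm (cl_subset_closed h₁ cl_closed) (cl_subset_closed h₂ cl_closed)

theorem sprod_comm (X Y : Set Bunch) : sprod X Y = sprod Y X := by
  have key : ∀ A B : Set Bunch,
      {Δ | ∃ a ∈ A, ∃ b ∈ B, Δ = Bunch.comma a b} ⊆
        cl {Δ | ∃ b ∈ B, ∃ a ∈ A, Δ = Bunch.comma b a} := by
    rintro A B Δ ⟨a, ha, b, hb, rfl⟩ χ hχ
    exact .equiv (hχ _ ⟨b, hb, a, ha, rfl⟩) (.commaComm _ _)
  exact cl_eq_of (key X Y) (key Y X)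

theorem aprod_comm (X Y : Set Bunch) : aprod X Y = aprod Y X := by
  have key : ∀ A B : Set Bunch,
      {Δ | ∃ a ∈ A, ∃ b ∈ B, Δ = Bunch.semic a b} ⊆
        cl {Δ | ∃ b ∈ B, ∃ a ∈ A, Δ = Bunch.semic b a} := by
    rintro A B Δ ⟨a, ha, b, hb, rfl⟩ χ hχ
    exact .equiv (hχ _ ⟨b, hb, a, ha, rfl⟩) (.semicComm _ _)
  exact cl_eq_of (key X Y) (key Y X)

theorem sprod_assoc (X Y Z : Set Bunch) :
    sprod X (sprod Y Z) = sprod (sprod X Y) Z := by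
  unfold sprod
  rw [show cl {Δ | ∃ a ∈ X, ∃ b ∈ cl {Δ | ∃ b ∈ Y, ∃ c ∈ Z, Δ = Bunch.comma b c},
        Δ = Bunch.comma a b} = sprod X (cl {Δ | ∃ b ∈ Y, ∃ c ∈ Z, Δ = Bunch.comma b c})
      from rfl, sprod_cl_r]
  rw [show cl {Δ | ∃ a ∈ cl {Δ | ∃ a ∈ X, ∃ b ∈ Y, Δ = Bunch.comma a b}, ∃ c ∈ Z,
        Δ = Bunch.comma a c} = sprod (cl {Δ | ∃ a ∈ X, ∃ b ∈ Y, Δ = Bunch.comma a b}) Z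
      from rfl, sprod_cl_l]
  unfold sprod
  apply cl_eq_of
  · rintro Δ ⟨a, ha, m, ⟨b, hb, c, hc, rfl⟩, rfl⟩ χ hχ
    exact .equiv (hχ _ ⟨_, ⟨a, ha, b, hb, rfl⟩, c, hc, rfl⟩) (.commaAssoc _ _ _)
  · rintro Δ ⟨m, ⟨a, ha, b, hb, rfl⟩, c, hc, rfl⟩ χ hχ
    exact .equiv (hχ _ ⟨a, ha, _, ⟨b, hb, c, hc, rfl⟩, rfl⟩)
      ((BEquiv.commaAssoc _ _ _).symm)

theorem aprod_assoc (X Y Z : Set Bunch) :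
    aprod X (aprod Y Z) = aprod (aprod X Y) Z := by
  unfold aprod
  rw [show cl {Δ | ∃ a ∈ X, ∃ b ∈ cl {Δ | ∃ b ∈ Y, ∃ c ∈ Z, Δ = Bunch.semic b c},
        Δ = Bunch.semic a b} = aprod X (cl {Δ | ∃ b ∈ Y, ∃ c ∈ Z, Δ = Bunch.semic b c})
      from rfl, aprod_cl_r]
  rw [show cl {Δ | ∃ a ∈ cl {Δ | ∃ a ∈ X, ∃ b ∈ Y, Δ = Bunch.semic a b}, ∃ c ∈ Z,
        Δ = Bunch.semic a c} = aprod (cl {Δ | ∃ a ∈ X, ∃ b ∈ Y, Δ = Bunch.semic a b}) Z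
      from rfl, aprod_cl_l]
  unfold aprod
  apply cl_eq_of
  · rintro Δ ⟨a, ha, m, ⟨b, hb, c, hc, rfl⟩, rfl⟩ χ hχ
    exact .equiv (hχ _ ⟨_, ⟨a, ha, b, hb, rfl⟩, c, hc, rfl⟩) (.semicAssoc _ _ _)
  · rintro Δ ⟨m, ⟨a, ha, b, hb, rfl⟩, c, hc, rfl⟩ χ hχ
    exact .equiv (hχ _ ⟨a, ha, _, ⟨b, hb, c, hc, rfl⟩, rfl⟩)
      ((BEquiv.semicAssoc _ _ _).symm)

theorem sprod_unit {X : Set Bunch} (hX : BClosed X) :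
    sprod X (cl {Bunch.mempty}) = X := by
  unfold sprod
  rw [show cl {Δ | ∃ a ∈ X, ∃ b ∈ cl {Bunch.mempty}, Δ = Bunch.comma a b}
      = sprod X (cl {Bunch.mempty}) from rfl, sprod_cl_r]
  apply le_antisymm
  · refine (cl_mono ?_).trans (cl_idem.trans hX)
    rintro Δ ⟨a, ha, b, rfl, rfl⟩ χ hχ
    exact .equiv (hχ _ ha) (.commaUnit _)
  · intro a ha χ hχ
    exact .equiv (hχ _ ⟨a, ha, .mempty, rfl, rfl⟩) ((BEquiv.commaUnit _).symm)

theorem aprod_unit {X : Set Bunch} (hX : BClosed X) :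
    aprod X (cl {Bunch.aempty}) = X := by
  unfold aprod
  rw [show cl {Δ | ∃ a ∈ X, ∃ b ∈ cl {Bunch.aempty}, Δ = Bunch.semic a b}
      = aprod X (cl {Bunch.aempty}) from rfl, aprod_cl_r]
  apply le_antisymm
  · refine (cl_mono ?_).trans (cl_idem.trans hX)
    rintro Δ ⟨a, ha, b, rfl, rfl⟩ χ hχ
    exact .equiv (hχ _ ha) (.semicUnit _)
  · intro a ha χ hχ
    exact .equiv (hχ _ ⟨a, ha, .aempty, rfl, rfl⟩) ((BEquiv.semicUnit _).symm)

theorem bsem_congr {Δ Δ' : Bunch} (h : BEquiv Δ Δ') : bsem Δ = bsem Δ' := by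
  induction h with
  | refl Δ => rfl
  | symm _ ih => exact ih.symm
  | trans _ _ ih₁ ih₂ => exact ih₁.trans ih₂
  | commaComm Δ₁ Δ₂ => exact sprod_comm _ _
  | semicComm Δ₁ Δ₂ => exact aprod_comm _ _
  | commaAssoc Δ₁ Δ₂ Δ₃ => exact sprod_assoc _ _ _
  | semicAssoc Δ₁ Δ₂ Δ₃ => exact aprod_assoc _ _ _
  | commaUnit Δ => exact sprod_unit (bsem_closed Δ)
  | semicUnit Δ => exact aprod_unit (bsem_closed Δ)
  | ctx C _ ih => rw [bsem_fill, bsem_fill, ih]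

theorem aprod_sub_l {X Y : Set Bunch} : aprod X Y ⊆ cl X := by
  refine (cl_mono ?_).trans cl_idem
  rintro Δ ⟨a, ha, b, hb, rfl⟩ χ hχ
  exact .weaken .hole (hχ _ ha)

theorem sub_aprod_diag {X : Set Bunch} : X ⊆ aprod X X := by
  intro a ha χ hχ
  exact .contract .hole (hχ _ ⟨a, ha, a, ha, rfl⟩)

theorem csem_union : ∀ (C : BCtx) (X Y : Set Bunch),
    csem C (X ∪ Y) ⊆ cl (csem C X ∪ csem C Y) := by
  intro C
  induction C with
  | hole => intro X Y; exact subset_cl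
  | commaL C Γ ih =>
      intro X Y
      refine (sprod_mono (ih X Y) (le_refl _)).trans ?_
      rw [sprod_cl_l]
      refine cl_mono ?_
      rintro Δ ⟨a, ha | ha, b, hb, rfl⟩
      · exact Or.inl (subset_cl ⟨a, ha, b, hb, rfl⟩)
      · exact Or.inr (subset_cl ⟨a, ha, b, hb, rfl⟩)
  | commaR Γ C ih =>
      intro X Y
      refine (sprod_mono (le_refl _) (ih X Y)).trans ?_
      rw [sprod_cl_r]
      refine cl_mono ?_
      rintro Δ ⟨a, ha, b, hb | hb, rfl⟩
      · exact Or.inl (subset_cl ⟨a, ha, b, hb, rfl⟩)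
      · exact Or.inr (subset_cl ⟨a, ha, b, hb, rfl⟩)
  | semicL C Γ ih =>
      intro X Y
      refine (aprod_mono (ih X Y) (le_refl _)).trans ?_
      rw [aprod_cl_l]
      refine cl_mono ?_
      rintro Δ ⟨a, ha | ha, b, hb, rfl⟩
      · exact Or.inl (subset_cl ⟨a, ha, b, hb, rfl⟩)
      · exact Or.inr (subset_cl ⟨a, ha, b, hb, rfl⟩)
  | semicR Γ C ih =>
      intro X Y
      refine (aprod_mono (le_refl _) (ih X Y)).trans ?_
      rw [aprod_cl_r]
      refine cl_mono ?_
      rintro Δ ⟨a, ha, b, hb | hb, rfl⟩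
      · exact Or.inl (subset_cl ⟨a, ha, b, hb, rfl⟩)
      · exact Or.inr (subset_cl ⟨a, ha, b, hb, rfl⟩)

theorem csem_bot : ∀ C : BCtx, csem C (cl ∅) ⊆ cl ∅ := by
  intro C
  induction C with
  | hole => intro X; exact fun h => h
  | commaL C Γ ih =>
      refine (sprod_mono ih (le_refl _)).trans ?_
      rw [sprod_cl_l]
      refine (cl_mono ?_).trans cl_idem
      rintro Δ ⟨a, ha, b, hb, rfl⟩
      exact absurd ha (Set.notMem_empty a)
  | commaR Γ C ih =>
      refine (sprod_mono (le_refl _) ih).trans ?_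
      rw [sprod_cl_r]
      refine (cl_mono ?_).trans cl_idem
      rintro Δ ⟨a, ha, b, hb, rfl⟩
      exact absurd hb (Set.notMem_empty b)
  | semicL C Γ ih =>
      refine (aprod_mono ih (le_refl _)).trans ?_
      rw [aprod_cl_l]
      refine (cl_mono ?_).trans cl_idem
      rintro Δ ⟨a, ha, b, hb, rfl⟩
      exact absurd ha (Set.notMem_empty a)
  | semicR Γ C ih =>
      refine (aprod_mono (le_refl _) ih).trans ?_
      rw [aprod_cl_r]
      refine (cl_mono ?_).trans cl_idem
      rintro Δ ⟨a, ha, b, hb, rfl⟩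
      exact absurd hb (Set.notMem_empty b)

/-- The Okada property. -/
theorem okada : ∀ φ : Frml, Bunch.frml φ ∈ fsem φ ∧ fsem φ ⊆ Pr φ := by
  intro φ
  induction φ with
  | atom a => exact ⟨Proves.ax a, fun Δ h => h⟩
  | top =>
      constructor
      · intro χ hχ
        exact .topL .hole (hχ _ rfl)
      · refine cl_subset_closed ?_ Pr_closed
        rintro Δ rfl
        exact .topR
  | bot =>
      constructor
      · intro χ hχ
        exact .botL .hole
      · refine cl_subset_closed ?_ Pr_closed
        rintro Δ h
        exact absurd h (Set.notMem_empty Δ)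
  | emp =>
      constructor
      · intro χ hχ
        exact .empL .hole (hχ _ rfl)
      · refine cl_subset_closed ?_ Pr_closed
        rintro Δ rfl
        exact .empR
  | and φ ψ ihφ ihψ =>
      constructor
      · intro χ hχ
        exact .andL .hole (hχ _ ⟨_, ihφ.1, _, ihψ.1, rfl⟩)
      · refine cl_subset_closed ?_ Pr_closed
        rintro Δ ⟨a, ha, b, hb, rfl⟩
        exact .andR (ihφ.2 ha) (ihψ.2 hb)
  | or φ ψ ihφ ihψ =>
      constructor
      · intro χ hχ
        exact .orL .hole (hχ _ (Or.inl ihφ.1)) (hχ _ (Or.inr ihψ.1))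
      · refine cl_subset_closed ?_ Pr_closed
        rintro Δ (h | h)
        · exact .orR1 (ihφ.2 h)
        · exact .orR2 (ihψ.2 h)
  | sep φ ψ ihφ ihψ =>
      constructor
      · intro χ hχ
        exact .sepL .hole (hχ _ ⟨_, ihφ.1, _, ihψ.1, rfl⟩)
      · refine cl_subset_closed ?_ Pr_closed
        rintro Δ ⟨a, ha, b, hb, rfl⟩
        exact .sepR (ihφ.2 ha) (ihψ.2 hb)
  | imp φ ψ ihφ ihψ =>
      constructor
      · intro a ha
        apply fsem_closed ψ
        intro χ hχ
        have hφ : Proves a φ := ihφ.2 ha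
        have h2 : Proves (.semic .aempty (.frml ψ)) χ :=
          .equiv (hχ _ ihψ.1) ((BEquiv.semicComm _ _).trans (BEquiv.semicUnit _))
        have h3 := Proves.impL (C := .hole) (Δ₁ := a) (Δ₂ := .aempty) hφ h2
        refine .equiv h3 ?_
        exact (BEquiv.semicComm _ _).trans
          (.ctx (.semicL .hole (.frml (.imp φ ψ))) ((BEquiv.semicUnit a).symm))
      · intro Δ hΔ
        exact .impR (ihψ.2 (hΔ _ ihφ.1))
  | wand φ ψ ihφ ihψ =>
      constructor
      · intro a ha
        apply fsem_closed ψ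
        intro χ hχ
        have hφ : Proves a φ := ihφ.2 ha
        have h2 : Proves (.comma .mempty (.frml ψ)) χ :=
          .equiv (hχ _ ihψ.1) ((BEquiv.commaComm _ _).trans (BEquiv.commaUnit _))
        have h3 := Proves.wandL (C := .hole) (Δ₁ := a) (Δ₂ := .mempty) hφ h2
        refine .equiv h3 ?_
        exact (BEquiv.commaComm _ _).trans
          (.ctx (.commaL .hole (.frml (.wand φ ψ))) ((BEquiv.commaUnit a).symm))
      · intro Δ hΔ
        exact .wandR (ihψ.2 (hΔ _ ihφ.1))

theorem bunch_okada : ∀ Δ : Bunch, Δ ∈ bsem Δ := by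
  intro Δ
  induction Δ with
  | frml φ => exact (okada φ).1
  | mempty => exact subset_cl rfl
  | aempty => exact subset_cl rfl
  | comma Δ₁ Δ₂ ih₁ ih₂ => exact subset_cl ⟨Δ₁, ih₁, Δ₂, ih₂, rfl⟩
  | semic Δ₁ Δ₂ ih₁ ih₂ => exact subset_cl ⟨Δ₁, ih₁, Δ₂, ih₂, rfl⟩

/-- Soundness of the calculus with cut in the syntactic algebra. -/
theorem soundC {Δ : Bunch} {φ : Frml} (h : ProvesC Δ φ) : bsem Δ ⊆ fsem φ := by
  induction h with
  | ax a => exact fun _ h => h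
  | equiv _ e ih => rw [bsem_congr e]; exact ih
  | weaken C _ ih =>
      rw [bsem_fill] at ih ⊢
      exact csem_push C aprod_sub_l ih (fsem_closed _)
  | contract C _ ih =>
      rw [bsem_fill] at ih ⊢
      exact (csem_mono C sub_aprod_diag).trans ih
  | empR => exact fun _ h => h
  | empL C _ ih =>
      rw [bsem_fill] at ih ⊢
      exact ih
  | sepR _ _ ih₁ ih₂ => exact sprod_mono ih₁ ih₂
  | sepL C _ ih =>
      rw [bsem_fill] at ih ⊢
      exact ih
  | wandR _ ih =>
      intro Δ₀ h₀ a ha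
      exact ih (subset_cl ⟨Δ₀, h₀, a, ha, rfl⟩)
  | wandL C _ _ ih₁ ih₂ =>
      rename_i Δ₁ Δ₂ φ' ψ' χ' _ _
      rw [bsem_fill] at ih₂ ⊢
      refine csem_push C ?_ ih₂ (fsem_closed _)
      simp only [bsem, fsem]
      rw [show sprod (sprod (bsem Δ₁) (bsem Δ₂)) (fwand (fsem φ') (fsem ψ'))
          = sprod {Δ | ∃ a ∈ bsem Δ₁, ∃ b ∈ bsem Δ₂, Δ = Bunch.comma a b}
              (fwand (fsem φ') (fsem ψ')) from sprod_cl_l _ _]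
      refine (cl_mono ?_).trans cl_idem
      rintro g ⟨m, ⟨a, ha, b, hb, rfl⟩, w, hw, rfl⟩ χ₀ hχ₀
      have hwa : Bunch.comma w a ∈ fsem ψ' := hw a (ih₁ ha)
      have := hχ₀ _ (subset_cl ⟨b, hb, .comma w a, hwa, rfl⟩)
      refine .equiv this ?_
      exact (BEquiv.commaComm (.comma a b) w).trans
        ((BEquiv.commaAssoc w a b).trans (BEquiv.commaComm (.comma w a) b))
  | topR => exact fun _ h => h
  | topL C _ ih =>
      rw [bsem_fill] at ih ⊢
      exact ih
  | andR _ _ ih₁ ih₂ => exact aprod_mono ih₁ ih₂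
  | andL C _ ih =>
      rw [bsem_fill] at ih ⊢
      exact ih
  | impR _ ih =>
      intro Δ₀ h₀ a ha
      exact ih (subset_cl ⟨Δ₀, h₀, a, ha, rfl⟩)
  | impL C _ _ ih₁ ih₂ =>
      rename_i Δ₁ Δ₂ φ' ψ' χ' _ _
      rw [bsem_fill] at ih₂ ⊢
      refine csem_push C ?_ ih₂ (fsem_closed _)
      simp only [bsem, fsem]
      rw [show aprod (aprod (bsem Δ₁) (bsem Δ₂)) (fimp (fsem φ') (fsem ψ'))
          = aprod {Δ | ∃ a ∈ bsem Δ₁, ∃ b ∈ bsem Δ₂, Δ = Bunch.semic a b}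
              (fimp (fsem φ') (fsem ψ')) from aprod_cl_l _ _]
      refine (cl_mono ?_).trans cl_idem
      rintro g ⟨m, ⟨a, ha, b, hb, rfl⟩, w, hw, rfl⟩ χ₀ hχ₀
      have hwa : Bunch.semic w a ∈ fsem ψ' := hw a (ih₁ ha)
      have := hχ₀ _ (subset_cl ⟨b, hb, .semic w a, hwa, rfl⟩)
      refine .equiv this ?_
      exact (BEquiv.semicComm (.semic a b) w).trans
        ((BEquiv.semicAssoc w a b).trans (BEquiv.semicComm (.semic w a) b))
  | botL C =>
      rw [bsem_fill]
      exact (csem_bot C).trans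
        ((cl_mono (Set.empty_subset _)).trans (fsem_closed _))
  | orR1 _ ih => exact fun Δ₀ h₀ => subset_cl (Or.inl (ih h₀))
  | orR2 _ ih => exact fun Δ₀ h₀ => subset_cl (Or.inr (ih h₀))
  | orL C _ _ ih₁ ih₂ =>
      rename_i φ' ψ' χ' _ _
      rw [bsem_fill] at ih₁ ih₂ ⊢
      calc csem C (cl (fsem φ' ∪ fsem ψ'))
          ⊆ cl (csem C (fsem φ' ∪ fsem ψ')) := csem_cl C _
        _ ⊆ cl (cl (csem C (fsem φ') ∪ csem C (fsem ψ'))) :=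
            cl_mono (csem_union C _ _)
        _ ⊆ cl (csem C (fsem φ') ∪ csem C (fsem ψ')) := cl_idem
        _ ⊆ cl (fsem χ') := cl_mono (Set.union_subset ih₁ ih₂)
        _ ⊆ fsem χ' := fsem_closed _
  | cut C _ _ ih₁ ih₂ =>
      rw [bsem_fill] at ih₂ ⊢
      exact (csem_mono C ih₁).trans ih₂

/-- Cut-free derivability embeds into derivability with cut. -/
theorem embedC {Δ : Bunch} {φ : Frml} (h : Proves Δ φ) : ProvesC Δ φ := by
  induction h with
  | ax a => exact .ax a
  | equiv _ e ih => exact .equiv ih e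
  | weaken C _ ih => exact .weaken C ih
  | contract C _ ih => exact .contract C ih
  | empR => exact .empR
  | empL C _ ih => exact .empL C ih
  | sepR _ _ ih₁ ih₂ => exact .sepR ih₁ ih₂
  | sepL C _ ih => exact .sepL C ih
  | wandR _ ih => exact .wandR ih
  | wandL C _ _ ih₁ ih₂ => exact .wandL C ih₁ ih₂
  | topR => exact .topR
  | topL C _ ih => exact .topL C ih
  | andR _ _ ih₁ ih₂ => exact .andR ih₁ ih₂
  | andL C _ ih => exact .andL C ih
  | impR _ ih => exact .impR ih
  | impL C _ _ ih₁ ih₂ => exact .impL C ih₁ ih₂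
  | botL C => exact .botL C
  | orR1 _ ih => exact .orR1 ih
  | orR2 _ ih => exact .orR2 ih
  | orL C _ _ ih₁ ih₂ => exact .orL C ih₁ ih₂

/-- Cut elimination. -/
theorem cut_elim {Δ : Bunch} {φ : Frml} (h : ProvesC Δ φ) : Proves Δ φ :=
  (okada φ).2 (soundC h (bunch_okada Δ))

/-- the cut rule is admissible in the cut-free fragment of BI:
if `Δ ⊢cf ψ` and `Γ(ψ) ⊢cf φ` then `Γ(Δ) ⊢cf φ`; consequently, every sequent
derivable with cut is derivable without cut. -/
theorem cut_admissible :
    (∀ (Γ : BCtx) (Δ : Bunch) (φ ψ : Frml),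
      Proves Δ ψ → Proves (Γ.fill (.frml ψ)) φ → Proves (Γ.fill Δ) φ) ∧
    (∀ (Δ : Bunch) (φ : Frml), ProvesC Δ φ → Proves Δ φ) := by
  constructor
  · intro Γ Δ φ ψ h1 h2
    exact cut_elim (ProvesC.cut Γ (embedC h1) (embedC h2))
  · intro Δ φ h
    exact cut_elim h
end

section
/- Decomposition of bunches under a context: if Π(Δ) = Π'(φ) for bunches/contexts Π, Π', bunch Δ, and formula φ, then either (a) there exists a context Π₀ with Δ = Π₀(φ) and Π' = Π ∘ Π₀, or (b) there exist functions Π₀, Π₁ from bunches to bunched contexts such that for all bunches Λ, Λ': Π(Λ) = Π₀(Λ)(φ), Π'(Λ) = Π₁(Λ)(Δ), and Π₀(Λ)(Λ') = Π₁(Λ')(Λ). -/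
/-- decomposition of bunches: if `Π(Δ) = Π'(φ)` then either the
formula `φ` occurs inside `Δ`, or it occurs in the context `Π`, in which case the
two decompositions commute. -/
theorem bunch_decomp_ctx (P P' : BCtx) (Δ : Bunch) (φ : Frml)
    (h : P.fill Δ = P'.fill (.frml φ)) :
    (∃ P₀ : BCtx, Δ = P₀.fill (.frml φ) ∧
      ∀ Γ : Bunch, P'.fill Γ = P.fill (P₀.fill Γ)) ∨
    (∃ P₀ P₁ : Bunch → BCtx,
      (∀ Λ : Bunch, P.fill Λ = (P₀ Λ).fill (.frml φ)) ∧
      (∀ Λ : Bunch, P'.fill Λ = (P₁ Λ).fill Δ) ∧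
      (∀ Λ Λ' : Bunch, (P₀ Λ).fill Λ' = (P₁ Λ').fill Λ)) := by
  induction P generalizing P' with
  | hole =>
    left; exact ⟨P', h, fun Γ => rfl⟩
  | commaL C Γb ih =>
    cases P' with
    | hole => simp [BCtx.fill] at h
    | commaL C' Γ' =>
      simp only [BCtx.fill, Bunch.comma.injEq] at h
      obtain ⟨h1, h2⟩ := h
      subst h2
      rcases ih C' h1 with ⟨P₀, hΔ, hc⟩ | ⟨P₀, P₁, e0, e1, e2⟩
      · left; exact ⟨P₀, hΔ, fun G => by simp [BCtx.fill, hc G]⟩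
      · right
        exact ⟨fun Λ => .commaL (P₀ Λ) Γb, fun Λ => .commaL (P₁ Λ) Γb,
          fun Λ => by simp [BCtx.fill, e0 Λ],
          fun Λ => by simp [BCtx.fill, e1 Λ],
          fun Λ Λ' => by simp [BCtx.fill, e2 Λ Λ']⟩
    | commaR Γ' C' =>
      simp only [BCtx.fill, Bunch.comma.injEq] at h
      obtain ⟨h1, h2⟩ := h
      right
      refine ⟨fun Λ => .commaR (C.fill Λ) C', fun Λ => .commaL C (C'.fill Λ), ?_, ?_, ?_⟩
      · intro Λ; simp [BCtx.fill, h2]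
      · intro Λ; simp [BCtx.fill, h1]
      · intro Λ Λ'; simp [BCtx.fill]
    | semicL C' Γ' => simp [BCtx.fill] at h
    | semicR Γ' C' => simp [BCtx.fill] at h
  | commaR Γb C ih =>
    cases P' with
    | hole => simp [BCtx.fill] at h
    | commaL C' Γ' =>
      simp only [BCtx.fill, Bunch.comma.injEq] at h
      obtain ⟨h1, h2⟩ := h
      right
      refine ⟨fun Λ => .commaL C' (C.fill Λ), fun Λ => .commaR (C'.fill Λ) C, ?_, ?_, ?_⟩
      · intro Λ; simp [BCtx.fill, h1]
      · intro Λ; simp [BCtx.fill, h2]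
      · intro Λ Λ'; simp [BCtx.fill]
    | commaR Γ' C' =>
      simp only [BCtx.fill, Bunch.comma.injEq] at h
      obtain ⟨h1, h2⟩ := h
      subst h1
      rcases ih C' h2 with ⟨P₀, hΔ, hc⟩ | ⟨P₀, P₁, e0, e1, e2⟩
      · left; exact ⟨P₀, hΔ, fun G => by simp [BCtx.fill, hc G]⟩
      · right
        exact ⟨fun Λ => .commaR Γb (P₀ Λ), fun Λ => .commaR Γb (P₁ Λ),
          fun Λ => by simp [BCtx.fill, e0 Λ],
          fun Λ => by simp [BCtx.fill, e1 Λ],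
          fun Λ Λ' => by simp [BCtx.fill, e2 Λ Λ']⟩
    | semicL C' Γ' => simp [BCtx.fill] at h
    | semicR Γ' C' => simp [BCtx.fill] at h
  | semicL C Γb ih =>
    cases P' with
    | hole => simp [BCtx.fill] at h
    | commaL C' Γ' => simp [BCtx.fill] at h
    | commaR Γ' C' => simp [BCtx.fill] at h
    | semicL C' Γ' =>
      simp only [BCtx.fill, Bunch.semic.injEq] at h
      obtain ⟨h1, h2⟩ := h
      subst h2
      rcases ih C' h1 with ⟨P₀, hΔ, hc⟩ | ⟨P₀, P₁, e0, e1, e2⟩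
      · left; exact ⟨P₀, hΔ, fun G => by simp [BCtx.fill, hc G]⟩
      · right
        exact ⟨fun Λ => .semicL (P₀ Λ) Γb, fun Λ => .semicL (P₁ Λ) Γb,
          fun Λ => by simp [BCtx.fill, e0 Λ],
          fun Λ => by simp [BCtx.fill, e1 Λ],
          fun Λ Λ' => by simp [BCtx.fill, e2 Λ Λ']⟩
    | semicR Γ' C' =>
      simp only [BCtx.fill, Bunch.semic.injEq] at h
      obtain ⟨h1, h2⟩ := h
      right
      refine ⟨fun Λ => .semicR (C.fill Λ) C', fun Λ => .semicL C (C'.fill Λ), ?_, ?_, ?_⟩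
      · intro Λ; simp [BCtx.fill, h2]
      · intro Λ; simp [BCtx.fill, h1]
      · intro Λ Λ'; simp [BCtx.fill]
  | semicR Γb C ih =>
    cases P' with
    | hole => simp [BCtx.fill] at h
    | commaL C' Γ' => simp [BCtx.fill] at h
    | commaR Γ' C' => simp [BCtx.fill] at h
    | semicL C' Γ' =>
      simp only [BCtx.fill, Bunch.semic.injEq] at h
      obtain ⟨h1, h2⟩ := h
      right
      refine ⟨fun Λ => .semicL C' (C.fill Λ), fun Λ => .semicR (C'.fill Λ) C, ?_, ?_, ?_⟩
      · intro Λ; simp [BCtx.fill, h1]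
      · intro Λ; simp [BCtx.fill, h2]
      · intro Λ Λ'; simp [BCtx.fill]
    | semicR Γ' C' =>
      simp only [BCtx.fill, Bunch.semic.injEq] at h
      obtain ⟨h1, h2⟩ := h
      subst h1
      rcases ih C' h2 with ⟨P₀, hΔ, hc⟩ | ⟨P₀, P₁, e0, e1, e2⟩
      · left; exact ⟨P₀, hΔ, fun G => by simp [BCtx.fill, hc G]⟩
      · right
        exact ⟨fun Λ => .semicR Γb (P₀ Λ), fun Λ => .semicR Γb (P₁ Λ),
          fun Λ => by simp [BCtx.fill, e0 Λ],
          fun Λ => by simp [BCtx.fill, e1 Λ],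
          fun Λ Λ' => by simp [BCtx.fill, e2 Λ Λ']⟩
end
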